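/- arXiv:1604.08875 — 5 statements merged into one kernel-verified Lean document; each statement's English description precedes it below -/
import Mathlib

section
/- Let M ⊕ N ↪ L be a primitive extension of lattices and let f_M ∈ O(M), f_N ∈ O(N) be isometries with minimal polynomials m(x) and n(x). If f_M ⊕ f_N extends to an isometry of L, then dL ⊆ M ⊕ N, where d is the positive generator of the ideal (m(x)ℤ[x] + n(x)ℤ[x]) ∩ ℤ. -/
open Polynomial


lemma aeval_restrict_coe {L : Type*} [AddCommGroup L] [Module ℤ L]
    (A : L →ₗ[ℤ] L) (M : Submodule ℤ L) (h : ∀ x ∈ M, A x ∈ M)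
    (p : Polynomial ℤ) (a : M) :
    (Polynomial.aeval A p) (a : L) = ((Polynomial.aeval (A.restrict h) p) a : L) := by
  induction p using Polynomial.induction_on' with
  | add p q hp hq => simp [hp, hq]
  | monomial k c =>
    simp only [aeval_monomial, Module.End.mul_apply, Module.algebraMap_end_apply,
      Module.End.pow_restrict, LinearMap.restrict_apply]
    rw [Module.End.pow_restrict, LinearMap.restrict_apply]
    simp


/-- Let `M ⊕ N ↪ L` be a primitive extension of lattices (`M`, `N` primitive
sublattices of the lattice `L` which are mutually orthogonal complements, with `M ⊕ N` of
finite index in `L`), and `f_M ∈ O(M)`, `f_N ∈ O(N)` isometries with minimal polynomials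
`m(x)` and `n(x)`.  If `f_M ⊕ f_N` extends to an isometry `f` of `L`, then `d L ⊆ M ⊕ N`,
where `d ≥ 0` is the generator of the ideal `(m(x)ℤ[x] + n(x)ℤ[x]) ∩ ℤ`. -/
theorem stmt2 {L : Type*} [AddCommGroup L] [Module ℤ L]
    [Module.Free ℤ L] [Module.Finite ℤ L]
    (Φ : L →ₗ[ℤ] L →ₗ[ℤ] ℤ)
    (hsymm : ∀ x y : L, Φ x y = Φ y x)
    (hnd : ∀ x : L, (∀ y : L, Φ x y = 0) → x = 0)
    (f : L ≃ₗ[ℤ] L) (hisom : ∀ x y : L, Φ (f x) (f y) = Φ x y)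
    (M N : Submodule ℤ L)
    (hMprim : ∀ (x : L) (c : ℤ), c ≠ 0 → c • x ∈ M → x ∈ M)
    (hNprim : ∀ (x : L) (c : ℤ), c ≠ 0 → c • x ∈ N → x ∈ N)
    (hNcompl : ∀ y : L, y ∈ N ↔ ∀ x ∈ M, Φ x y = 0)
    (hMcompl : ∀ x : L, x ∈ M ↔ ∀ y ∈ N, Φ x y = 0)
    (hindex : ∀ x : L, ∃ c : ℤ, c ≠ 0 ∧ c • x ∈ M ⊔ N)
    (hfM : ∀ x ∈ M, f.toLinearMap x ∈ M) (hfN : ∀ y ∈ N, f.toLinearMap y ∈ N)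
    (m n : Polynomial ℤ)
    (hm : m = minpoly ℤ (f.toLinearMap.restrict hfM))
    (hn : n = minpoly ℤ (f.toLinearMap.restrict hfN))
    (d : ℤ) (hd : 0 ≤ d)
    (hgen : ∀ c : ℤ, Polynomial.C c ∈ Ideal.span ({m, n} : Set (Polynomial ℤ)) ↔ d ∣ c) :
    ∀ x : L, d • x ∈ M ⊔ N := by
  intro x
  set A := f.toLinearMap with hA
  obtain ⟨u, v, huv⟩ := Ideal.mem_span_pair.mp ((hgen d).mpr dvd_rfl)
  -- kill lemmas
  have hmM : ∀ y ∈ M, (aeval A m) y = 0 := by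
    intro y hy
    rw [show y = ((⟨y, hy⟩ : M) : L) from rfl, aeval_restrict_coe A M hfM, hm,
      minpoly.aeval]
    rfl
  have hnN : ∀ y ∈ N, (aeval A n) y = 0 := by
    intro y hy
    rw [show y = ((⟨y, hy⟩ : N) : L) from rfl, aeval_restrict_coe A N hfN, hn,
      minpoly.aeval]
    rfl
  have hMinv : ∀ (p : Polynomial ℤ) (y : L), y ∈ M → (aeval A p) y ∈ M := by
    intro p y hy
    rw [show y = ((⟨y, hy⟩ : M) : L) from rfl, aeval_restrict_coe A M hfM]
    exact Submodule.coe_mem _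
  have hNinv : ∀ (p : Polynomial ℤ) (y : L), y ∈ N → (aeval A p) y ∈ N := by
    intro p y hy
    rw [show y = ((⟨y, hy⟩ : N) : L) from rfl, aeval_restrict_coe A N hfN]
    exact Submodule.coe_mem _
  obtain ⟨c, hc, hcx⟩ := hindex x
  rw [Submodule.mem_sup] at hcx
  obtain ⟨a, ha, b, hb, hab⟩ := hcx
  have hmx : (aeval A m) x ∈ N := by
    apply hNprim _ c hc
    have h1 : c • (aeval A m) x = (aeval A m) (c • x) := (map_zsmul _ _ _).symm
    rw [h1, ← hab, map_add, hmM a ha, zero_add]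
    exact hNinv m b hb
  have hnx : (aeval A n) x ∈ M := by
    apply hMprim _ c hc
    have h1 : c • (aeval A n) x = (aeval A n) (c • x) := (map_zsmul _ _ _).symm
    rw [h1, ← hab, map_add, hnN b hb, add_zero]
    exact hMinv n a ha
  have key : d • x = (aeval A u) ((aeval A m) x) + (aeval A v) ((aeval A n) x) := by
    have h2 : (aeval A (u * m + v * n)) x = (aeval A (Polynomial.C d)) x := by rw [huv]
    rw [map_add, map_mul, map_mul, aeval_C, LinearMap.add_apply, Module.End.mul_apply,
      Module.End.mul_apply] at h2
    exact (show d • x = (algebraMap ℤ (L →ₗ[ℤ] L) d) x by simp).trans h2.symm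
  rw [key]
  exact Submodule.mem_sup.mpr ⟨(aeval A v) ((aeval A n) x), hMinv v _ hnx,
      (aeval A u) ((aeval A m) x), hNinv u _ hmx, by abel⟩
end

section
/- Let M ⊕ N ↪ L be a primitive extension of lattices with glue group G ≅ L/(M ⊕ N), and let f_M, f_N be isometries of M and N with characteristic polynomials χ_M and χ_N. If f_M ⊕ f_N extends to an isometry of L, then every prime dividing |G| divides the resultant res(χ_M, χ_N). -/
open Polynomial

/-- The Sylvester matrix of two integer polynomials `f` and `g`. -/
noncomputable def sylvesterMatrix (f g : Polynomial ℤ) :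
    Matrix (Fin (f.natDegree + g.natDegree)) (Fin (f.natDegree + g.natDegree)) ℤ :=
  Matrix.of fun i j =>
    if (i : ℕ) < g.natDegree then
      (if (i : ℕ) ≤ (j : ℕ) then f.coeff ((j : ℕ) - (i : ℕ)) else 0)
    else
      (if (i : ℕ) - g.natDegree ≤ (j : ℕ) then g.coeff ((j : ℕ) - ((i : ℕ) - g.natDegree)) else 0)

/-- The resultant of two integer polynomials, as the determinant of their Sylvester matrix. -/
noncomputable def resultant (f g : Polynomial ℤ) : ℤ := (sylvesterMatrix f g).det

lemma row_sum (f : Polynomial ℤ) (i D : ℕ) (h : f.natDegree + i < D) :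
    (∑ j ∈ Finset.range D, (if i ≤ j then C (f.coeff (j - i)) else 0) * X ^ j)
      = f * X ^ i := by
  have hiD : i ≤ D := by omega
  rw [Finset.range_eq_Ico, ← Finset.sum_Ico_consecutive _ (Nat.zero_le i) hiD]
  have h0 : (∑ j ∈ Finset.Ico 0 i, (if i ≤ j then C (f.coeff (j - i)) else 0) * X ^ j) = 0 := by
    apply Finset.sum_eq_zero
    intro j hj
    rw [Finset.mem_Ico] at hj
    rw [if_neg (by omega), zero_mul]
  rw [h0, zero_add, Finset.sum_Ico_eq_sum_range]
  have hc : ∀ k ∈ Finset.range (D - i),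
      (if i ≤ i + k then C (f.coeff (i + k - i)) else 0) * X ^ (i + k)
        = (C (f.coeff k) * X ^ k) * X ^ i := by
    intro k _
    rw [if_pos (Nat.le_add_right _ _)]
    have : i + k - i = k := by omega
    rw [this, pow_add]
    ring
  rw [Finset.sum_congr rfl hc, ← Finset.sum_mul]
  congr 1
  have := f.as_sum_range' (D - i) (by omega)
  conv_rhs => rw [this]
  exact Finset.sum_congr rfl fun k _ => C_mul_X_pow_eq_monomial

lemma resultant_eq_comb (f g : Polynomial ℤ) (hf : f.Monic) :
    ∃ u v : Polynomial ℤ, C (_root_.resultant f g) = u * f + v * g := by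
  by_cases hD : f.natDegree + g.natDegree = 0
  · have hf1 : f = 1 := (hf.natDegree_eq_zero).mp (by omega)
    exact ⟨C (_root_.resultant f g), 0, by rw [hf1, mul_one, zero_mul, add_zero]⟩
  · set m := f.natDegree
    set n := g.natDegree
    set D := m + n with hDdef
    have hD' : 0 < D := Nat.pos_of_ne_zero hD
    set S := sylvesterMatrix f g with hS
    set SC : Matrix (Fin D) (Fin D) (Polynomial ℤ) := (C : ℤ →+* Polynomial ℤ).mapMatrix S with hSC
    set w : Fin D → Polynomial ℤ := fun j => X ^ (j : ℕ) with hw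
    have hrow : ∀ i : Fin D, (SC.mulVec w) i
        = if (i : ℕ) < n then f * X ^ (i : ℕ) else g * X ^ ((i : ℕ) - n) := by
      intro i
      by_cases hi : (i : ℕ) < n
      · rw [if_pos hi]
        have e1 : (SC.mulVec w) i
            = ∑ j : Fin D, (if (i : ℕ) ≤ (j : ℕ) then C (f.coeff ((j : ℕ) - (i : ℕ))) else 0) * X ^ (j : ℕ) := by
          simp only [Matrix.mulVec, dotProduct, hSC, hS, RingHom.mapMatrix_apply,
            Matrix.map_apply, sylvesterMatrix, Matrix.of_apply, if_pos hi, hw]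
          exact Finset.sum_congr rfl fun j _ => by split_ifs <;> simp
        rw [e1, Fin.sum_univ_eq_sum_range
          (fun j => (if (i : ℕ) ≤ j then C (f.coeff (j - (i : ℕ))) else 0) * X ^ j)]
        exact row_sum f i D (by omega)
      · rw [if_neg hi]
        have e1 : (SC.mulVec w) i
            = ∑ j : Fin D, (if (i : ℕ) - n ≤ (j : ℕ) then C (g.coeff ((j : ℕ) - ((i : ℕ) - n))) else 0) * X ^ (j : ℕ) := by
          simp only [Matrix.mulVec, dotProduct, hSC, hS, RingHom.mapMatrix_apply,
            Matrix.map_apply, sylvesterMatrix, Matrix.of_apply, if_neg hi, hw]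
          exact Finset.sum_congr rfl fun j _ => by split_ifs <;> simp_all [n] <;> omega
        rw [e1, Fin.sum_univ_eq_sum_range
          (fun j => (if (i : ℕ) - n ≤ j then C (g.coeff (j - ((i : ℕ) - n))) else 0) * X ^ j)]
        exact row_sum g ((i : ℕ) - n) D (by have := i.isLt; omega)
    set i0 : Fin D := ⟨0, hD'⟩ with hi0
    refine ⟨∑ i : Fin D, if (i : ℕ) < n then SC.adjugate i0 i * X ^ (i : ℕ) else 0,
            ∑ i : Fin D, if (i : ℕ) < n then 0 else SC.adjugate i0 i * X ^ ((i : ℕ) - n), ?_⟩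
    have hdet : C (_root_.resultant f g) = SC.det := RingHom.map_det C S
    have key2 : SC.adjugate.mulVec (SC.mulVec w) = SC.det • w := by
      rw [Matrix.mulVec_mulVec, Matrix.adjugate_mul, Matrix.smul_mulVec, Matrix.one_mulVec]
    have e0 := congrFun key2 i0
    have eL : (SC.adjugate.mulVec (SC.mulVec w)) i0 = ∑ i : Fin D, SC.adjugate i0 i * (SC.mulVec w) i := rfl
    have eR : ((SC.det • w : Fin D → Polynomial ℤ)) i0 = SC.det := by
      simp [hw, hi0]
    rw [eL, eR] at e0
    rw [hdet, ← e0, Finset.sum_mul, Finset.sum_mul, ← Finset.sum_add_distrib]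
    apply Finset.sum_congr rfl
    intro i _
    rw [hrow i]
    split_ifs with h
    · ring
    · ring

lemma aeval_comm {L M₀ : Type*} [AddCommGroup L] [Module ℤ L] [AddCommGroup M₀] [Module ℤ M₀]
    (g : M₀ →ₗ[ℤ] M₀) (f : L →ₗ[ℤ] L) (ι : M₀ →ₗ[ℤ] L)
    (hcomm : ∀ y, ι (g y) = f (ι y)) (p : Polynomial ℤ) (y : M₀) :
    ι (Polynomial.aeval g p y) = Polynomial.aeval f p (ι y) := by
  induction p using Polynomial.induction_on' with
  | add p q hp hq => simp only [map_add, LinearMap.add_apply, hp, hq]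
  | monomial k a =>
    have hk : ∀ z, ι ((g ^ k) z) = (f ^ k) (ι z) := by
      induction k with
      | zero => intro z; simp
      | succ k ih =>
        intro z
        rw [pow_succ, pow_succ, Module.End.mul_apply, Module.End.mul_apply, ih, hcomm]
    rw [← C_mul_X_pow_eq_monomial, map_mul, map_mul, aeval_C, aeval_C, aeval_X_pow, aeval_X_pow,
      Module.End.mul_apply, Module.End.mul_apply, algebraMap_int_eq, eq_intCast, eq_intCast,
      Module.End.intCast_apply, Module.End.intCast_apply, map_zsmul, hk]

/-- The characteristic polynomial of the restriction of `f` to an invariant submodule. -/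
noncomputable def restrictCharpoly {L : Type*} [AddCommGroup L] [Module ℤ L]
    [Module.Free ℤ L] [Module.Finite ℤ L]
    (f : L →ₗ[ℤ] L) (M : Submodule ℤ L) (h : ∀ x ∈ M, f x ∈ M) : Polynomial ℤ := by
  letI : Module ℤ ↥M := M.module
  exact LinearMap.charpoly (f.restrict h)

lemma aeval_mem {L : Type*} [AddCommGroup L] [Module ℤ L]
    (f : L →ₗ[ℤ] L) (M : Submodule ℤ L) (h : ∀ x ∈ M, f x ∈ M) (p : Polynomial ℤ)
    (x : L) (hx : x ∈ M) : Polynomial.aeval f p x ∈ M := by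
  letI : Module ℤ ↥M := M.module
  have := aeval_comm (f.restrict h) f M.subtype (fun y => rfl) p ⟨x, hx⟩
  simp only [Submodule.coe_subtype] at this
  rw [← this]
  exact SetLike.coe_mem _

lemma aeval_charpoly_zero {L : Type*} [AddCommGroup L] [Module ℤ L]
    [Module.Free ℤ L] [Module.Finite ℤ L]
    (f : L →ₗ[ℤ] L) (M : Submodule ℤ L) (h : ∀ x ∈ M, f x ∈ M)
    (x : L) (hx : x ∈ M) : Polynomial.aeval f (restrictCharpoly f M h) x = 0 := by
  letI : Module ℤ ↥M := M.module
  have hc := aeval_comm (f.restrict h) f M.subtype (fun y => rfl) (restrictCharpoly f M h) ⟨x, hx⟩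
  simp only [Submodule.coe_subtype] at hc
  rw [← hc]
  have hz : Polynomial.aeval (f.restrict h) (restrictCharpoly f M h) = 0 :=
    LinearMap.aeval_self_charpoly (f.restrict h)
  rw [show (Ring.toIntAlgebra _ : Algebra ℤ (↥M →ₗ[ℤ] ↥M)) = Module.End.instAlgebra ℤ ℤ ↥M from
    Subsingleton.elim _ _, hz]
  simp

/-- Let `M ⊕ N ↪ L` be a primitive extension of lattices with glue group
`G ≅ L/(M ⊕ N)`, and `f_M, f_N` isometries of `M` and `N` with characteristic polynomials
`χ_M`, `χ_N`.  If `f_M ⊕ f_N` extends to an isometry of `L`, then every prime dividing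
`|G|` divides `res(χ_M, χ_N)`. -/
theorem stmt3 {L : Type*} [AddCommGroup L] [Module ℤ L]
    [Module.Free ℤ L] [Module.Finite ℤ L]
    (Φ : L →ₗ[ℤ] L →ₗ[ℤ] ℤ)
    (hsymm : ∀ x y : L, Φ x y = Φ y x)
    (hnd : ∀ x : L, (∀ y : L, Φ x y = 0) → x = 0)
    (f : L ≃ₗ[ℤ] L) (hisom : ∀ x y : L, Φ (f x) (f y) = Φ x y)
    (M N : Submodule ℤ L)
    (hMprim : ∀ (x : L) (c : ℤ), c ≠ 0 → c • x ∈ M → x ∈ M)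
    (hNprim : ∀ (x : L) (c : ℤ), c ≠ 0 → c • x ∈ N → x ∈ N)
    (hNcompl : ∀ y : L, y ∈ N ↔ ∀ x ∈ M, Φ x y = 0)
    (hMcompl : ∀ x : L, x ∈ M ↔ ∀ y ∈ N, Φ x y = 0)
    (hindex : ∀ x : L, ∃ c : ℤ, c ≠ 0 ∧ c • x ∈ M ⊔ N)
    (hfM : ∀ x ∈ M, f.toLinearMap x ∈ M) (hfN : ∀ y ∈ N, f.toLinearMap y ∈ N) :
    ∀ p : ℕ, p.Prime → p ∣ Nat.card (L ⧸ (M ⊔ N)) →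
      (p : ℤ) ∣ _root_.resultant (restrictCharpoly f.toLinearMap M hfM)
        (restrictCharpoly f.toLinearMap N hfN) := by
  intro p hp hpcard
  set F := f.toLinearMap with hF
  set χM := restrictCharpoly F M hfM with hχM
  set χN := restrictCharpoly F N hfN with hχN
  set r := _root_.resultant χM χN with hr
  have hmonM : χM.Monic := by
    rw [hχM]
    letI : Module ℤ ↥M := M.module
    exact LinearMap.charpoly_monic (F.restrict hfM)
  obtain ⟨u, v, huv⟩ := resultant_eq_comb χM χN hmonM
  -- key: r • x ∈ M ⊔ N for every x
  have hglue : ∀ x : L, r • x ∈ M ⊔ N := by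
    intro x
    obtain ⟨c, hc0, hcx⟩ := hindex x
    rw [← Int.cast_smul_eq_zsmul ℤ] at hcx
    obtain ⟨m0, hm0, n0, hn0, hmn⟩ := Submodule.mem_sup.mp hcx
    have h1 : Polynomial.aeval F χM x ∈ N := by
      apply hNprim _ c hc0
      rw [← Int.cast_smul_eq_zsmul ℤ, ← (Polynomial.aeval F χM).map_smul, ← hmn, map_add,
        aeval_charpoly_zero F M hfM m0 hm0, zero_add]
      exact aeval_mem F N hfN χM n0 hn0
    have h2 : Polynomial.aeval F χN x ∈ M := by
      apply hMprim _ c hc0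
      rw [← Int.cast_smul_eq_zsmul ℤ, ← (Polynomial.aeval F χN).map_smul, ← hmn, map_add,
        aeval_charpoly_zero F N hfN n0 hn0, add_zero]
      exact aeval_mem F M hfM χN m0 hm0
    have e2 : Polynomial.aeval F (C r) x = Polynomial.aeval F u (Polynomial.aeval F χM x)
        + Polynomial.aeval F v (Polynomial.aeval F χN x) := by
      have h0 := congrArg (fun q => Polynomial.aeval F q x) huv
      simpa only [map_add, map_mul, LinearMap.add_apply, Module.End.mul_apply] using h0
    have e3 : (algebraMap ℤ (Module.End ℤ L) r) x = r • x := rfl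
    rw [← e3,
      show (algebraMap ℤ (Module.End ℤ L) r) = Polynomial.aeval F (C r) from
        (Polynomial.aeval_C F r).symm, e2]
    exact Submodule.add_mem _ (Submodule.mem_sup_right (aeval_mem F N hfN u _ h1))
      (Submodule.mem_sup_left (aeval_mem F M hfM v _ h2))
  -- r annihilates the glue group (as zsmul)
  have hann : ∀ g : L ⧸ (M ⊔ N), r • g = 0 := by
    intro g
    obtain ⟨x, rfl⟩ := Submodule.Quotient.mk_surjective _ g
    rw [← Submodule.mkQ_apply, ← map_zsmul ((M ⊔ N).mkQ) r x, Submodule.mkQ_apply]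
    exact (Submodule.Quotient.mk_eq_zero _).mpr (hglue x)
  by_cases hr0 : r = 0
  · rw [hr0]; exact dvd_zero _
  · letI instQ : Module ℤ (L ⧸ (M ⊔ N)) := Submodule.Quotient.module (M ⊔ N)
    haveI instQfin : Module.Finite ℤ (L ⧸ (M ⊔ N)) := Module.Finite.of_surjective (M ⊔ N).mkQ (Submodule.mkQ_surjective _)
    have htor : Module.IsTorsion ℤ (L ⧸ (M ⊔ N)) := by
      intro g
      refine ⟨⟨r, mem_nonZeroDivisors_of_ne_zero hr0⟩, ?_⟩
      exact (Int.cast_smul_eq_zsmul ℤ r g).trans (hann g)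
    haveI hfin : Finite (L ⧸ (M ⊔ N)) := Module.finite_of_fg_torsion _ htor
    haveI := Fintype.ofFinite (L ⧸ (M ⊔ N))
    haveI : Fact p.Prime := ⟨hp⟩
    rw [Nat.card_eq_fintype_card] at hpcard
    obtain ⟨g, hg⟩ := exists_prime_addOrderOf_dvd_card p hpcard
    have hdvd := addOrderOf_dvd_iff_zsmul_eq_zero.mpr (hann g)
    rwa [hg] at hdvd
end

section
/- For integers 0 < m < n, the ideal (ℤ[x]·c_n + ℤ[x]·c_m) ∩ ℤ equals pℤ if n/m is a power of a prime p, and equals ℤ otherwise. -/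
open Polynomial


-- The cyclotomic polynomial of `p^a * k'` mod `p` is a positive power of that of `k'`.
lemma pow_form (p : ℕ) (hp : p.Prime) (a k' : ℕ) (hk' : ¬ p ∣ k') :
    ∃ i, 0 < i ∧ cyclotomic (p ^ a * k') (ZMod p) = cyclotomic k' (ZMod p) ^ i := by
  haveI : Fact p.Prime := ⟨hp⟩
  rcases Nat.eq_zero_or_pos a with ha | ha
  · exact ⟨1, one_pos, by simp [ha]⟩
  · refine ⟨p ^ a - p ^ (a - 1), ?_, cyclotomic_mul_prime_pow_eq (ZMod p) hk' ha⟩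
    have : p ^ (a - 1) < p ^ a := by
      apply Nat.pow_lt_pow_right hp.one_lt
      omega
    omega

-- distinct indices prime to q give coprime cyclotomics mod q
lemma cop_base (q a b : ℕ) (hq : q.Prime) (ha : 0 < a) (hb : 0 < b)
    (hqa : ¬ q ∣ a) (hqb : ¬ q ∣ b) (hab : a ≠ b) :
    IsCoprime (cyclotomic a (ZMod q)) (cyclotomic b (ZMod q)) := by
  classical
  haveI : Fact q.Prime := ⟨hq⟩
  have hN : 0 < a * b := Nat.mul_pos ha hb
  have hsq : Squarefree (X ^ (a * b) - 1 : (ZMod q)[X]) := by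
    apply Polynomial.Separable.squarefree
    rw [Polynomial.X_pow_sub_one_separable_iff]
    rw [Ne, ZMod.natCast_eq_zero_iff]
    exact fun h => (hq.dvd_mul.mp h).elim hqa hqb
  have hdvd : cyclotomic a (ZMod q) * cyclotomic b (ZMod q) ∣ X ^ (a * b) - 1 := by
    rw [← prod_cyclotomic_eq_X_pow_sub_one hN]
    have hsub : ({a, b} : Finset ℕ) ⊆ (a * b).divisors := by
      intro x hx
      simp only [Finset.mem_insert, Finset.mem_singleton] at hx
      rcases hx with rfl | rfl
      · exact Nat.mem_divisors.mpr ⟨Dvd.intro _ rfl, hN.ne'⟩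
      · exact Nat.mem_divisors.mpr ⟨Dvd.intro_left _ rfl, hN.ne'⟩
    have := Finset.prod_dvd_prod_of_subset _ _ (fun i => cyclotomic i (ZMod q)) hsub
    rwa [Finset.prod_pair hab] at this
  rw [← EuclideanDomain.gcd_isUnit_iff]
  apply hsq
  calc EuclideanDomain.gcd (cyclotomic a (ZMod q)) (cyclotomic b (ZMod q)) *
      EuclideanDomain.gcd (cyclotomic a (ZMod q)) (cyclotomic b (ZMod q)) ∣
      cyclotomic a (ZMod q) * cyclotomic b (ZMod q) :=
        mul_dvd_mul (EuclideanDomain.gcd_dvd_left _ _) (EuclideanDomain.gcd_dvd_right _ _)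
    _ ∣ X ^ (a * b) - 1 := hdvd

-- lifting a coprimality mod q to an element 1 + q*h of the span
lemma lift_cop (q : ℕ) (hq : q.Prime) (f g : ℤ[X])
    (h : IsCoprime (f.map (Int.castRingHom (ZMod q))) (g.map (Int.castRingHom (ZMod q)))) :
    ∃ h' : ℤ[X], 1 + C (q : ℤ) * h' ∈ Ideal.span ({f, g} : Set ℤ[X]) := by
  obtain ⟨u, v, huv⟩ := h
  obtain ⟨a, ha⟩ := Polynomial.map_surjective (Int.castRingHom (ZMod q)) (fun x => ZMod.intCast_surjective x) u
  obtain ⟨b, hb⟩ := Polynomial.map_surjective (Int.castRingHom (ZMod q)) (fun x => ZMod.intCast_surjective x) v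
  have hker : C (q : ℤ) ∣ a * f + b * g - 1 := by
    rw [Polynomial.C_dvd_iff_dvd_coeff]
    intro i
    have hmap : (a * f + b * g - 1).map (Int.castRingHom (ZMod q)) = 0 := by
      simp only [Polynomial.map_sub, Polynomial.map_add, Polynomial.map_mul, Polynomial.map_one,
        ha, hb]
      rw [huv, sub_self]
    have := congrArg (fun P => Polynomial.coeff P i) hmap
    simp only [Polynomial.coeff_map, Polynomial.coeff_zero] at this
    exact_mod_cast (ZMod.intCast_zmod_eq_zero_iff_dvd _ q).mp this
  obtain ⟨h', hh'⟩ := hker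
  refine ⟨h', ?_⟩
  have : 1 + C (q : ℤ) * h' = a * f + b * g := by rw [← hh']; ring
  rw [this]
  exact Ideal.add_mem _ (Ideal.mul_mem_left _ _ (Ideal.subset_span (by simp)))
    (Ideal.mul_mem_left _ _ (Ideal.subset_span (by simp)))

-- stripping primes
lemma strip (f g : ℤ[X])
    (hall : ∀ q : ℕ, q.Prime → ∃ h' : ℤ[X], 1 + C (q : ℤ) * h' ∈ Ideal.span ({f, g} : Set ℤ[X]))
    (c : ℤ) (hc : c ≠ 0) (hmem : C c ∈ Ideal.span ({f, g} : Set ℤ[X])) :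
    (1 : ℤ[X]) ∈ Ideal.span ({f, g} : Set ℤ[X]) := by
  obtain ⟨k, hk⟩ : ∃ k, c.natAbs = k := ⟨_, rfl⟩
  induction k using Nat.strong_induction_on generalizing c with
  | _ k ih =>
    rcases eq_or_ne c.natAbs 1 with h1 | h1
    · have hcc : c * c = 1 := by
        rcases Int.natAbs_eq_iff.mp h1 with rfl | rfl <;> norm_num
      have : (1 : ℤ[X]) = C c * C c := by rw [← Polynomial.C_mul, hcc, Polynomial.C_1]
      rw [this]
      exact Ideal.mul_mem_left _ _ hmem
    · obtain ⟨q, hq, hqc⟩ := Nat.exists_prime_and_dvd h1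
      have hqc' : (q : ℤ) ∣ c := Int.dvd_natAbs.mp (Int.natCast_dvd_natCast.mpr hqc)
      obtain ⟨c', rfl⟩ := hqc'
      obtain ⟨h', hh'⟩ := hall q hq
      have hmem' : C c' ∈ Ideal.span ({f, g} : Set ℤ[X]) := by
        have key : C c' = C c' * (1 + C (q : ℤ) * h') - C ((q : ℤ) * c') * h' := by
          rw [Polynomial.C_mul]
          ring
        rw [key]
        exact Ideal.sub_mem _ (Ideal.mul_mem_left _ _ hh') (Ideal.mul_mem_right _ _ hmem)
      have hc' : c' ≠ 0 := by
        rintro rfl; simp at hc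
      refine ih c'.natAbs ?_ c' hc' hmem' rfl
      rw [← hk, Int.natAbs_mul, Int.natAbs_natCast]
      have : 2 ≤ q := hq.two_le
      have : 0 < c'.natAbs := Int.natAbs_pos.mpr hc'
      nlinarith

-- there is a nonzero integer in the span
lemma exists_int (n m : ℕ) (hn : 0 < n) (hm : 0 < m) (hnm : n ≠ m) :
    ∃ N : ℤ, N ≠ 0 ∧ C N ∈ Ideal.span ({cyclotomic n ℤ, cyclotomic m ℤ} : Set ℤ[X]) := by
  obtain ⟨u, v, huv⟩ := cyclotomic.isCoprime_rat (n := n) (m := m) hnm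
  obtain ⟨bu, hbu⟩ := IsLocalization.integerNormalization_map_to_map (nonZeroDivisors ℤ) u
  obtain ⟨bv, hbv⟩ := IsLocalization.integerNormalization_map_to_map (nonZeroDivisors ℤ) v
  set U := IsLocalization.integerNormalization (nonZeroDivisors ℤ) u with hU
  set V := IsLocalization.integerNormalization (nonZeroDivisors ℤ) v with hV
  have hsmul : ∀ (z : ℤ) (w : ℚ[X]), z • w = C ((z : ℚ)) * w := by
    intro z w
    ext k
    simp [Polynomial.coeff_smul, Polynomial.coeff_C_mul, zsmul_eq_mul]
  refine ⟨(bu : ℤ) * (bv : ℤ), mul_ne_zero (nonZeroDivisors.coe_ne_zero bu)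
    (nonZeroDivisors.coe_ne_zero bv), ?_⟩
  rw [Ideal.mem_span_pair]
  refine ⟨C ((bv : ℤ)) * U, C ((bu : ℤ)) * V, ?_⟩
  apply Polynomial.map_injective (Int.castRingHom ℚ) Int.cast_injective
  have halg : (algebraMap ℤ ℚ) = Int.castRingHom ℚ := rfl
  rw [halg] at hbu hbv
  rw [hsmul] at hbu hbv
  simp only [Polynomial.map_add, Polynomial.map_mul, Polynomial.map_C, map_cyclotomic, hbu, hbv,
    map_mul, Polynomial.C_mul, Int.coe_castRingHom, Int.cast_mul]
  linear_combination (C (((bu : ℤ) : ℚ)) * C (((bv : ℤ) : ℚ))) * huv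

-- p is in the span when n = m * p ^ e
lemma p_mem (p e m : ℕ) (hp : p.Prime) (he : 0 < e) (hm : 0 < m) :
    C ((p : ℤ)) ∈ Ideal.span ({cyclotomic (m * p ^ e) ℤ, cyclotomic m ℤ} : Set ℤ[X]) := by
  haveI : Fact p.Prime := ⟨hp⟩
  set n := m * p ^ e with hn
  have hnpos : 0 < n := Nat.mul_pos hm (Nat.pow_pos hp.pos)
  -- (1) cyclotomic n ℤ ∣ expand ℤ m (cyclotomic (p ^ e) ℤ)
  have hdvd1 : cyclotomic n ℤ ∣ Polynomial.expand ℤ m (cyclotomic (p ^ e) ℤ) := by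
    rw [← Polynomial.map_dvd_map (Int.castRingHom ℚ) Int.cast_injective (cyclotomic.monic n ℤ)]
    rw [map_cyclotomic, Polynomial.map_expand, map_cyclotomic]
    set ζ := Complex.exp (2 * Real.pi * Complex.I / n) with hζdef
    have hζ : IsPrimitiveRoot ζ n := Complex.isPrimitiveRoot_exp n hnpos.ne'
    rw [cyclotomic_eq_minpoly_rat hζ hnpos]
    apply minpoly.dvd
    rw [Polynomial.expand_aeval]
    have hζm : IsPrimitiveRoot (ζ ^ m) (p ^ e) := hζ.pow hnpos hn
    have : Polynomial.aeval (ζ ^ m) (cyclotomic (p ^ e) ℚ) =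
        Polynomial.eval (ζ ^ m) (cyclotomic (p ^ e) ℂ) := by
      rw [Polynomial.aeval_def, Polynomial.eval₂_eq_eval_map, map_cyclotomic]
    rw [this]
    exact hζm.isRoot_cyclotomic (Nat.pow_pos hp.pos)
  -- (2) X ^ m - 1 divides expand - C p
  have hdvd2 : (X ^ m - 1 : ℤ[X]) ∣ Polynomial.expand ℤ m (cyclotomic (p ^ e) ℤ) - C ((p : ℤ)) := by
    have h1 : (X - C (1 : ℤ)) ∣ cyclotomic (p ^ e) ℤ - C (Polynomial.eval 1 (cyclotomic (p ^ e) ℤ)) :=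
      Polynomial.X_sub_C_dvd_sub_C_eval
    have heval : Polynomial.eval (1 : ℤ) (cyclotomic (p ^ e) ℤ) = (p : ℤ) := by
      obtain ⟨e', rfl⟩ : ∃ e', e = e' + 1 := ⟨e - 1, by omega⟩
      exact Polynomial.eval_one_cyclotomic_prime_pow e'
    rw [heval] at h1
    have h2 := map_dvd (Polynomial.expand ℤ m) h1
    simpa only [map_sub, Polynomial.expand_X, Polynomial.expand_C, map_one] using h2
  obtain ⟨h, hh⟩ := hdvd1
  obtain ⟨g, hg⟩ := hdvd2
  obtain ⟨w, hw⟩ := cyclotomic.dvd_X_pow_sub_one m ℤ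
  rw [Ideal.mem_span_pair]
  refine ⟨h, -(w * g), ?_⟩
  have : C ((p : ℤ)) = Polynomial.expand ℤ m (cyclotomic (p ^ e) ℤ) - (X ^ m - 1) * g := by
    rw [← hg]; ring
  rw [this, hh, hw]
  ring

-- forward direction : membership implies p ∣ c
lemma fwd (p e m : ℕ) (hp : p.Prime) (hm : 0 < m) (c : ℤ)
    (hc : C c ∈ Ideal.span ({cyclotomic (m * p ^ e) ℤ, cyclotomic m ℤ} : Set ℤ[X])) :
    (p : ℤ) ∣ c := by
  haveI : Fact p.Prime := ⟨hp⟩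
  obtain ⟨a, b, hab⟩ := Ideal.mem_span_pair.mp hc
  obtain ⟨k, m', hm', hmeq⟩ := Nat.exists_eq_pow_mul_and_not_dvd hm.ne' p hp.ne_one
  have hm'pos : 0 < m' := by
    rcases Nat.eq_zero_or_pos m' with h | h
    · subst h; simp at hmeq; omega
    · exact h
  obtain ⟨i, hi, hcycn⟩ := pow_form p hp (e + k) m' hm'
  obtain ⟨j, hj, hcycm⟩ := pow_form p hp k m' hm'
  have hneq : m * p ^ e = p ^ (e + k) * m' := by rw [hmeq]; ring
  have hmap := congrArg (Polynomial.map (Int.castRingHom (ZMod p))) hab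
  simp only [Polynomial.map_add, Polynomial.map_mul, Polynomial.map_C, map_cyclotomic] at hmap
  rw [hneq, hcycn] at hmap
  rw [show m = p ^ k * m' from hmeq, hcycm] at hmap
  have hdvd : cyclotomic m' (ZMod p) ∣ C ((Int.castRingHom (ZMod p)) c) := by
    rw [← hmap]
    exact dvd_add (Dvd.dvd.mul_left (dvd_pow_self _ hi.ne') _)
      (Dvd.dvd.mul_left (dvd_pow_self _ hj.ne') _)
  have hdeg : 0 < (cyclotomic m' (ZMod p)).degree := degree_cyclotomic_pos m' _ hm'pos
  have hc0 : C ((Int.castRingHom (ZMod p)) c) = 0 := by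
    by_contra h
    have := Polynomial.degree_le_of_dvd hdvd h
    rw [Polynomial.degree_C (fun hh => h (by rw [hh, Polynomial.C_0]))] at this
    exact absurd (lt_of_lt_of_le hdeg this) (lt_irrefl _)
  have : ((c : ZMod p)) = 0 := by
    have := congrArg (fun P => Polynomial.coeff P 0) hc0
    simpa using this
  exact (ZMod.intCast_zmod_eq_zero_iff_dvd c p).mp this

-- arithmetic lemma
lemma nt_lemma (q n m a b t : ℕ) (hq : q.Prime) (hm : 0 < m) (hmn : m < n)
    (hn' : n = q ^ a * t) (hm' : m = q ^ b * t) : ∃ e, 0 < e ∧ n = m * q ^ e := by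
  have ht : 0 < t := by
    rcases Nat.eq_zero_or_pos t with h | h
    · subst h; simp at hm'; omega
    · exact h
  have hab : b < a := by
    have : q ^ b * t < q ^ a * t := by omega
    have hpow : q ^ b < q ^ a := Nat.lt_of_mul_lt_mul_right this
    exact (Nat.pow_lt_pow_iff_right hq.one_lt).mp hpow
  refine ⟨a - b, by omega, ?_⟩
  have hqa : q ^ a = q ^ b * q ^ (a - b) := by rw [← pow_add]; congr 1; omega
  rw [hn', hm', hqa]
  ring

/-- For `0 < m < n`, the ideal `(ℤ[x]·c_n + ℤ[x]·c_m) ∩ ℤ` equals `pℤ`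
if `n / m` is a power of a prime `p`, and equals `ℤ` otherwise. -/
theorem stmt5 (n m : ℕ) (h0 : 0 < m) (hmn : m < n) :
    (∀ p e : ℕ, p.Prime → 0 < e → n = m * p ^ e →
      ∀ c : ℤ, C c ∈ Ideal.span ({cyclotomic n ℤ, cyclotomic m ℤ} : Set (Polynomial ℤ)) ↔ (p : ℤ) ∣ c) ∧
    ((¬ ∃ p e : ℕ, p.Prime ∧ 0 < e ∧ n = m * p ^ e) →
      ∀ c : ℤ, C c ∈ Ideal.span ({cyclotomic n ℤ, cyclotomic m ℤ} : Set (Polynomial ℤ))) := by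
  have hnpos : 0 < n := lt_trans h0 hmn
  constructor
  · intro p e hp he hn c
    subst hn
    constructor
    · exact fwd p e m hp h0 c
    · rintro ⟨d, rfl⟩
      have hmem := p_mem p e m hp he h0
      have : C ((p : ℤ) * d) = C d * C ((p : ℤ)) := by
        rw [← Polynomial.C_mul]; ring_nf
      rw [this]
      exact Ideal.mul_mem_left _ _ hmem
  · intro hne c
    have hall : ∀ q : ℕ, q.Prime →
        ∃ h' : ℤ[X], 1 + C (q : ℤ) * h' ∈
          Ideal.span ({cyclotomic n ℤ, cyclotomic m ℤ} : Set ℤ[X]) := by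
      intro q hq
      apply lift_cop q hq
      rw [map_cyclotomic, map_cyclotomic]
      obtain ⟨a, n', hn', hneq⟩ := Nat.exists_eq_pow_mul_and_not_dvd hnpos.ne' q hq.ne_one
      obtain ⟨b, m', hm', hmeq⟩ := Nat.exists_eq_pow_mul_and_not_dvd h0.ne' q hq.ne_one
      have hn'pos : 0 < n' := by
        rcases Nat.eq_zero_or_pos n' with h | h
        · subst h; simp at hneq; omega
        · exact h
      have hm'pos : 0 < m' := by
        rcases Nat.eq_zero_or_pos m' with h | h
        · subst h; simp at hmeq; omega
        · exact h
      have hdist : n' ≠ m' := by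
        rintro rfl
        obtain ⟨e, he, hpow⟩ := nt_lemma q n m a b n' hq h0 hmn hneq hmeq
        exact hne ⟨q, e, hq, he, hpow⟩
      obtain ⟨i, hi, hcycn⟩ := pow_form q hq a n' hn'
      obtain ⟨j, hj, hcycm⟩ := pow_form q hq b m' hm'
      rw [hneq, hmeq, hcycn, hcycm]
      exact (cop_base q n' m' hq hn'pos hm'pos hn' hm' hdist).pow
    obtain ⟨N, hN, hNmem⟩ := exists_int n m hnpos h0 hmn.ne'
    have h1 : (1 : ℤ[X]) ∈ Ideal.span ({cyclotomic n ℤ, cyclotomic m ℤ} : Set ℤ[X]) :=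
      strip _ _ hall N hN hNmem
    have : C c = C c * 1 := by ring
    rw [this]
    exact Ideal.mul_mem_left _ _ h1
end

section
/- Let L be an even lattice (x² ∈ 2ℤ for all x ∈ L) and a ∈ End(L) a self-adjoint endomorphism (⟨ax, y⟩ = ⟨x, ay⟩ for all x, y). Then the twisted form ⟨x, y⟩_a := ⟨ax, y⟩ is again even, i.e. ⟨x, x⟩_a ∈ 2ℤ for all x ∈ L, provided a lies in ℤ[f + f⁻¹] for some isometry f of L. -/
/-- Let `L` be an even lattice and `f` an isometry of `L`.  If
`a ∈ ℤ[f + f⁻¹] ⊆ End(L)` (such endomorphisms are self-adjoint), then the twisted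
form `⟨x, y⟩_a = ⟨a x, y⟩` is again even: `⟨x, x⟩_a ∈ 2ℤ` for all `x ∈ L`. -/
theorem stmt8 {L : Type*} [AddCommGroup L] [Module ℤ L]
    (Φ : L →ₗ[ℤ] L →ₗ[ℤ] ℤ)
    (hsymm : ∀ x y : L, Φ x y = Φ y x)
    (heven : ∀ x : L, (2 : ℤ) ∣ Φ x x)
    (f : L ≃ₗ[ℤ] L) (hisom : ∀ x y : L, Φ (f x) (f y) = Φ x y)
    (a : Module.End ℤ L)
    (hself : ∀ x y : L, Φ (a x) y = Φ x (a y))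
    (ha : a ∈ Algebra.adjoin ℤ
      ({f.toLinearMap + f.symm.toLinearMap} : Set (Module.End ℤ L))) :
    ∀ x : L, (2 : ℤ) ∣ Φ (a x) x := by
  intro x
  set s : Module.End ℤ L := f.toLinearMap + f.symm.toLinearMap with hs
  have hfadj : ∀ u v : L, Φ (f u) v = Φ u (f.symm v) := by
    intro u v
    conv_lhs => rw [← f.apply_symm_apply v]
    rw [hisom]
  have hfadj' : ∀ u v : L, Φ (f.symm u) v = Φ u (f v) :=
    fun u v => (hsymm _ _).trans (((hfadj v u).symm).trans (hsymm _ _))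
  have hsadj : ∀ u v : L, Φ (s u) v = Φ u (s v) := by
    intro u v
    simp only [hs, LinearMap.add_apply, LinearEquiv.coe_coe, map_add,
      LinearMap.add_apply]
    rw [hfadj, hfadj']
    ring
  have hpow : ∀ (n : ℕ) (u v : L), Φ ((s ^ n) u) v = Φ u ((s ^ n) v) := by
    intro n
    induction n with
    | zero => intro u v; simp
    | succ n ih =>
      intro u v
      rw [pow_succ']
      simp only [Module.End.mul_apply]
      rw [hsadj, ih, ← Module.End.mul_apply, ← Module.End.mul_apply,
        ← pow_succ', pow_succ]
  have hmono : ∀ n : ℕ, (2 : ℤ) ∣ Φ ((s ^ n) x) x := by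
    intro n
    rcases Nat.even_or_odd n with ⟨k, hk⟩ | ⟨k, hk⟩
    · subst hk
      have h : (s ^ (k + k)) x = (s ^ k) ((s ^ k) x) := by
        rw [pow_add]; rfl
      rw [h, hpow]
      exact heven _
    · subst hk
      have h : (s ^ (2 * k + 1)) x = (s ^ k) (s ((s ^ k) x)) := by
        have h2 : 2 * k + 1 = k + 1 + k := by ring
        rw [h2, pow_add, pow_succ]; rfl
      rw [h, hpow]
      set y := (s ^ k) x with hy
      have h2 : Φ (s y) y = 2 * Φ (f y) y := by
        simp only [hs, LinearMap.add_apply, LinearEquiv.coe_coe, map_add,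
          LinearMap.add_apply]
        rw [show Φ (f.symm y) y = Φ (f y) y from
          (hfadj' y y).trans (hsymm _ _)]
        ring
      rw [h2]
      exact ⟨_, rfl⟩
  have key : ∀ p : Polynomial ℤ, (2 : ℤ) ∣ Φ ((Polynomial.aeval s p) x) x := by
    intro p
    induction p using Polynomial.induction_on' with
    | add p q hpih hqih =>
      rw [map_add]
      simp only [LinearMap.add_apply, map_add]
      exact dvd_add hpih hqih
    | monomial n c =>
      rw [Polynomial.aeval_monomial]
      simp only [Module.End.mul_apply, Module.algebraMap_end_apply,
        LinearMap.map_smul_of_tower, LinearMap.smul_apply, smul_eq_mul]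
      rw [show (algebraMap ℤ (Module.End ℤ L) c) ((s ^ n) x) = c • (s ^ n) x from
        LinearMap.congr_fun (algebraMap_int_eq (R := Module.End ℤ L) ▸ eq_intCast _ c) _ |>.trans
          (Module.End.intCast_apply c _), LinearMap.map_smul_of_tower, LinearMap.smul_apply,
        smul_eq_mul]
      exact Dvd.dvd.mul_left (hmono n) c
  rw [Algebra.adjoin_singleton_eq_range_aeval] at ha
  obtain ⟨p, hp⟩ := ha
  rw [← hp]
  exact key p
end

section
/- Let (A, a) be a g-lattice where A is a lattice carrying the structure of an 𝒪_K-module via a, with 𝒪_K = ℤ[x]/p(x) the ring of integers of a CM field K with class number one, and suppose (A, a) is isomorphic to a twist L₀(t) of the principal p(x)-lattice. Then every automorphism h of (A, a) (an isometry commuting with a) is a unit of 𝒪_K of absolute value 1 at every archimedean place, hence a root of unity; therefore Aut(A, a) = ⟨±a⟩ when the roots of unity in K are generated by −1 and the image of x. -/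
/-- Let `(A, a)` be a `p(x)`-lattice isomorphic to a twist of the principal
`p(x)`-lattice, so that automorphisms of `(A, a)` are elements `h` of `K^×` which are
integral over `ℤ` and preserve the trace form `⟨g₁,g₂⟩ = Tr^K_ℚ(c g₁ g₂^σ)` (`c` absorbing
the twist and `r'(x+x⁻¹)`).  Here `K` is a CM field with involution `σ` (complex conjugation
under every complex embedding) and `θ` the image of `x`.  Then any such `h` has `h h^σ = 1`,
hence absolute value `1` at every archimedean place, hence is a root of unity (Kronecker);
therefore if the roots of unity of `K` are generated by `-1` and `θ`, then `h = ±θ^m`,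
i.e. `Aut(A, a) = ⟨± a⟩`. -/
theorem stmt10 {K : Type*} [Field K] [NumberField K]
    (σ : K ≃ₐ[ℚ] K) (c θ : K) (hc : c ≠ 0) (hσc : σ c = c)
    (hσθ : σ θ = θ⁻¹) (hθint : IsIntegral ℤ θ) (hθ0 : θ ≠ 0)
    (hCM : ∀ φ : K →+* ℂ, ∀ z : K, φ (σ z) = (starRingEnd ℂ) (φ z))
    (hnd : ∀ z : K, z ≠ 0 → ∃ w : K, Algebra.trace ℚ K (z * w) ≠ 0)
    (hroots : ∀ z : K, (∃ k : ℕ, 0 < k ∧ z ^ k = 1) → ∃ m : ℤ, z = θ ^ m ∨ z = -θ ^ m)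
    (h : K) (hne : h ≠ 0) (hint : IsIntegral ℤ h)
    (hisom : ∀ g₁ g₂ : K,
      Algebra.trace ℚ K (c * (h * g₁) * σ (h * g₂)) = Algebra.trace ℚ K (c * g₁ * σ g₂)) :
    (∃ k : ℕ, 0 < k ∧ h ^ k = 1) ∧ ∃ m : ℤ, h = θ ^ m ∨ h = -θ ^ m := by
  have key : h * σ h = 1 := by
    by_contra hk
    have hz : c * (h * σ h - 1) ≠ 0 := by
      apply mul_ne_zero hc
      exact sub_ne_zero.mpr hk
    obtain ⟨w, hw⟩ := hnd _ hz
    apply hw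
    have := hisom w 1
    have h2 : Algebra.trace ℚ K (c * (h * σ h - 1) * w)
        = Algebra.trace ℚ K (c * (h * w) * σ (h * 1)) - Algebra.trace ℚ K (c * w * σ 1) := by
      rw [← map_sub]
      congr 1
      simp [map_one]
      ring
    rw [h2, this]
    ring_nf
  have habs : ∀ φ : K →+* ℂ, ‖φ h‖ = 1 := by
    intro φ
    have h1 : φ h * (starRingEnd ℂ) (φ h) = 1 := by
      rw [← hCM φ h, ← map_mul, key, map_one]
    have h2 : Complex.normSq (φ h) = 1 := by
      rw [Complex.mul_conj] at h1
      exact_mod_cast h1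
    have h3 : ‖φ h‖ ^ 2 = 1 := by
      rw [Complex.sq_norm, h2]
    nlinarith [norm_nonneg (φ h)]
  obtain ⟨n, hn, hpow⟩ := NumberField.Embeddings.pow_eq_one_of_norm_eq_one K ℂ hint habs
  exact ⟨⟨n, hn, hpow⟩, hroots h ⟨n, hn, hpow⟩⟩
end
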